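/- arXiv:1310.2397 — 5 statements merged into one kernel-verified Lean document; each statement's English description precedes it below -/
import Mathlib

section
/- Let T : 𝐇 ⇉ ℝ² be an H-monotone set-valued map with dom(T) = 𝐇. If for every λ > 0 and every g ∈ 𝐇 the map h ↦ ξ₁(h) + λT(h) restricted to the horizontal plane H_g is surjective onto ℝ², then T is maximal H-monotone. -/
/-- The Heisenberg group as a set: ℝ³. -/
abbrev Heis : Type := ℝ × ℝ × ℝ

/-- The first layer V₁ of the Lie algebra, identified with ℝ². -/
abbrev V2 : Type := ℝ × ℝ

/-- Heisenberg group law: (x,y,t)∘(x',y',t') = (x+x', y+y', t+t'+2(x'y−xy')). -/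
def hmul (g g' : Heis) : Heis :=
  (g.1 + g'.1, g.2.1 + g'.2.1, g.2.2 + g'.2.2 + 2 * (g'.1 * g.2.1 - g.1 * g'.2.1))

/-- Group inverse in the Heisenberg group. -/
def hinv (g : Heis) : Heis := (-g.1, -g.2.1, -g.2.2)

/-- Exponential of a horizontal vector: exp (a,b) = (a,b,0). -/
def hexp (w : V2) : Heis := (w.1, w.2, 0)

/-- Projection ξ₁ : 𝐇 → V₁, ξ₁(x,y,t) = (x,y). -/
def xi1 (g : Heis) : V2 := (g.1, g.2.1)

/-- Euclidean inner product on ℝ². -/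
def dot (v w : V2) : ℝ := v.1 * w.1 + v.2 * w.2

/-- Euclidean norm on ℝ². -/
noncomputable def nrm (v : V2) : ℝ := Real.sqrt (v.1 ^ 2 + v.2 ^ 2)

/-- The horizontal plane through g: H_g = {g ∘ exp w : w ∈ ℝ²}. -/
def hplane (g : Heis) : Set Heis := {h | ∃ w : V2, h = hmul g (hexp w)}

/-- H-monotonicity of a set-valued map T : 𝐇 ⇉ ℝ². -/
def HMonotone (T : Heis → Set V2) : Prop :=
  ∀ g g' : Heis, g' ∈ hplane g → ∀ v ∈ T g, ∀ v' ∈ T g',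
    0 ≤ dot (v' - v) (xi1 g' - xi1 g)

/-- Maximal H-monotonicity: T is H-monotone and there is no H-monotone map
strictly extending it. -/
def MaximalHMonotone (T : Heis → Set V2) : Prop :=
  HMonotone T ∧
    ¬ ∃ T' : Heis → Set V2, HMonotone T' ∧ (∀ g, T g ⊆ T' g) ∧ ∃ g, T g ⊂ T' g

/-- g₀, …, gₙ is a closed H-sequence: g_{i+1} ∈ H_{g_i} for i < n, and g₀ ∈ H_{gₙ}. -/
def IsClosedHSeq (n : ℕ) (g : ℕ → Heis) : Prop :=
  (∀ i < n, g (i + 1) ∈ hplane (g i)) ∧ g 0 ∈ hplane (g n)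

/-- H-cyclic monotonicity: for every closed H-sequence g₀,…,gₙ (n ≥ 1), setting
g_{n+1} = g₀, and every vᵢ ∈ T(gᵢ), ∑_{i=0}^{n} ⟨vᵢ, ξ₁(g_{i+1}) − ξ₁(gᵢ)⟩ ≤ 0. -/
def HCyclicallyMonotone (T : Heis → Set V2) : Prop :=
  ∀ n : ℕ, 1 ≤ n → ∀ g : ℕ → Heis, IsClosedHSeq n g →
    ∀ v : ℕ → V2, (∀ i ≤ n, v i ∈ T (g i)) →
      ∑ i ∈ Finset.range (n + 1),
        dot (v i) (xi1 (g ((i + 1) % (n + 1))) - xi1 (g i)) ≤ 0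

/-- Maximal H-cyclic monotonicity. -/
def MaximalHCyclicallyMonotone (T : Heis → Set V2) : Prop :=
  HCyclicallyMonotone T ∧
    ¬ ∃ T' : Heis → Set V2, HCyclicallyMonotone T' ∧ (∀ g, T g ⊆ T' g) ∧ ∃ g, T g ⊂ T' g

/-- H-convexity of u : 𝐇 → ℝ. -/
def HConvex (u : Heis → ℝ) : Prop :=
  ∀ g : Heis, ∀ w : V2, ∀ lam : ℝ, 0 ≤ lam → lam ≤ 1 →
    u (hmul g (hexp (lam • w))) ≤ u g + lam * (u (hmul g (hexp w)) - u g)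

/-- The horizontal subdifferential ∂_H u (g). -/
def Hsubdiff (u : Heis → ℝ) (g : Heis) : Set V2 :=
  {v | ∀ w : V2, u g + dot v w ≤ u (hmul g (hexp w))}

/-- if T is H-monotone with dom(T) = 𝐇 and ξ₁ + λT restricted to
every horizontal plane is surjective onto ℝ² for every λ > 0, then T is
maximal H-monotone. -/
theorem stmt1 (T : Heis → Set V2)
    (hmono : HMonotone T)
    (hdom : ∀ g : Heis, (T g).Nonempty)
    (hsurj : ∀ lam : ℝ, 0 < lam → ∀ g : Heis, ∀ v : V2,
      ∃ h ∈ hplane g, ∃ w ∈ T h, xi1 h + lam • w = v) :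
    MaximalHMonotone T := by

  refine ⟨hmono, ?_⟩
  rintro ⟨T', hT', hsub, g₀, hss⟩
  obtain ⟨v₀, hv₀', hv₀⟩ := Set.exists_of_ssubset hss
  obtain ⟨h, hh, w, hw, heq⟩ := hsurj 1 one_pos g₀ (xi1 g₀ + v₀)
  rw [one_smul] at heq
  have hmon := hT' g₀ h hh v₀ hv₀' w (hsub h hw)
  have hx : xi1 h - xi1 g₀ = v₀ - w :=
    sub_eq_sub_iff_add_eq_add.mpr (heq.trans (add_comm _ _))
  rw [hx] at hmon
  have h1 : (w - v₀).1 = w.1 - v₀.1 := rfl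
  have h2 : (w - v₀).2 = w.2 - v₀.2 := rfl
  have h3 : (v₀ - w).1 = v₀.1 - w.1 := rfl
  have h4 : (v₀ - w).2 = v₀.2 - w.2 := rfl
  simp only [dot, h1, h2, h3, h4] at hmon
  have hw1 : w.1 = v₀.1 := by nlinarith [sq_nonneg (w.1 - v₀.1), sq_nonneg (w.2 - v₀.2)]
  have hw2 : w.2 = v₀.2 := by nlinarith [sq_nonneg (w.1 - v₀.1), sq_nonneg (w.2 - v₀.2)]
  have hwv : w = v₀ := Prod.ext hw1 hw2
  obtain ⟨ω, hω⟩ := hh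
  have hxh : xi1 h = xi1 g₀ := by rw [hwv] at hx; simpa using sub_eq_zero.mp (by rw [hx]; abel)
  have hω0 : ω = (0 : V2) := by
    have := hxh
    rw [hω] at this
    simp [xi1, hmul, hexp] at this
    exact Prod.ext this.1 this.2
  have hhg : h = g₀ := by
    rw [hω, hω0]
    simp [hmul, hexp]
  rw [hhg, hwv] at hw
  exact hv₀ hw
end

section
/- If T : 𝐇 ⇉ ℝ² is a maximal H-cyclically monotone set-valued map with dom(T) = 𝐇, then there exists an H-convex function u : 𝐇 → ℝ such that T(g) = ∂_H u(g) for every g ∈ 𝐇. -/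
/- ==================== auxiliary lemmas ==================== -/

lemma xi1_hmul_hexp (g : Heis) (w : V2) : xi1 (hmul g (hexp w)) = xi1 g + w := rfl

lemma hmul_hexp_zero (g : Heis) : hmul g (hexp 0) = g := by
  simp [hmul, hexp, Prod.ext_iff]

lemma hmul_hexp_hexp_smul (g : Heis) (w : V2) (l m : ℝ) :
    hmul (hmul g (hexp (l • w))) (hexp (m • w)) = hmul g (hexp ((l + m) • w)) := by
  simp only [hmul, hexp, Prod.ext_iff, Prod.smul_fst, Prod.smul_snd, smul_eq_mul]
  refine ⟨by ring, by ring, by ring⟩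

lemma connector (g h : Heis) : ∃ w1 w2 w3 : V2,
    h = hmul (hmul (hmul g (hexp w1)) (hexp w2)) (hexp w3) := by
  set b : ℝ := (h.2.2 - g.2.2 - 2*(h.1 - g.1)*g.2.1 + 2*(h.1 - 1)*(h.2.1 - g.2.1))/2 with hb
  refine ⟨(h.1 - g.1 - 1, 0), (0, b), (1, h.2.1 - g.2.1 - b), ?_⟩
  simp only [hmul, hexp, Prod.ext_iff, hb]
  refine ⟨by ring, by ring, by ring⟩

lemma subdiff_step {u : Heis → ℝ} {v : V2} {g h : Heis} (hv : v ∈ Hsubdiff u g)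
    (hh : h ∈ hplane g) : dot v (xi1 h - xi1 g) ≤ u h - u g := by
  obtain ⟨w, rfl⟩ := hh
  rw [xi1_hmul_hexp, add_sub_cancel_left]
  have := hv w
  linarith

lemma subdiff_cmono (u : Heis → ℝ) : HCyclicallyMonotone (Hsubdiff u) := by
  intro n hn g hseq v hv
  have step : ∀ i ∈ Finset.range (n + 1),
      dot (v i) (xi1 (g ((i + 1) % (n + 1))) - xi1 (g i))
        ≤ u (g ((i + 1) % (n + 1))) - u (g i) := by
    intro i hi
    rw [Finset.mem_range] at hi
    rcases Nat.lt_or_ge i n with h | h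
    · rw [Nat.mod_eq_of_lt (by omega)]
      exact subdiff_step (hv i (by omega)) (hseq.1 i h)
    · have hi' : i = n := by omega
      subst hi'
      rw [Nat.mod_self]
      exact subdiff_step (hv _ le_rfl) hseq.2
  refine le_of_le_of_eq (Finset.sum_le_sum step) ?_
  rw [Finset.sum_sub_distrib]
  have h1 : ∑ i ∈ Finset.range (n + 1), u (g ((i + 1) % (n + 1)))
      = ∑ i ∈ Finset.range (n + 1), u (g i) := by
    rw [Finset.sum_range_succ, Finset.sum_range_succ']
    congr 1
    · exact Finset.sum_congr rfl fun i hi => by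
        rw [Nat.mod_eq_of_lt (by simpa using Nat.succ_lt_succ (Finset.mem_range.mp hi))]
    · rw [Nat.mod_self]
  rw [h1, sub_self]

/-- The set of Rockafellar chain sums from `base` to `g`. -/
def chainSums (T : Heis → Set V2) (base g : Heis) : Set ℝ :=
  {s | ∃ n : ℕ, ∃ gs : ℕ → Heis, ∃ vs : ℕ → V2,
      gs 0 = base ∧ gs n = g ∧ (∀ i < n, gs (i + 1) ∈ hplane (gs i)) ∧
      (∀ i < n, vs i ∈ T (gs i)) ∧
      s = ∑ i ∈ Finset.range n, dot (vs i) (xi1 (gs (i + 1)) - xi1 (gs i))}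

/-- a maximal H-cyclically monotone map with dom(T) = 𝐇 is the
H-subdifferential map of some H-convex function. -/
theorem stmt4 (T : Heis → Set V2)
    (hdom : ∀ g : Heis, (T g).Nonempty)
    (hmax : MaximalHCyclicallyMonotone T) :
    ∃ u : Heis → ℝ, HConvex u ∧ ∀ g : Heis, T g = Hsubdiff u g := by
  classical
  obtain ⟨hcyc, hnoext⟩ := hmax
  choose sel hsel using hdom
  set base : Heis := (0, 0, 0) with hbase
  set S : Heis → Set ℝ := chainSums T base with hSdef
  -- every chainSums set is nonempty
  have hne : ∀ g, (S g).Nonempty := by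
    intro g
    obtain ⟨w1, w2, w3, hw⟩ := connector base g
    set p1 := hmul base (hexp w1) with hp1
    set p2 := hmul p1 (hexp w2) with hp2
    set gs : ℕ → Heis := fun i => if i = 0 then base else if i = 1 then p1
      else if i = 2 then p2 else g with hgs
    refine ⟨_, 3, gs, fun i => sel (gs i), by simp [hgs], by simp [hgs], ?_, ?_, rfl⟩
    · intro i hi
      interval_cases i
      · show gs 1 ∈ hplane (gs 0)
        simp only [hgs]
        norm_num
        exact ⟨w1, hp1⟩
      · show gs 2 ∈ hplane (gs 1)
        simp only [hgs]
        norm_num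
        exact ⟨w2, hp2⟩
      · show gs 3 ∈ hplane (gs 2)
        simp only [hgs]
        norm_num
        exact ⟨w3, by rw [hw, hp2, hp1]⟩
    · intro i _
      exact hsel (gs i)
  -- every chainSums set is bounded above
  have hbdd : ∀ g, BddAbove (S g) := by
    intro g
    obtain ⟨w1, w2, w3, hw⟩ := connector g base
    set c1 := hmul g (hexp w1) with hc1
    set c2 := hmul c1 (hexp w2) with hc2
    refine ⟨-(dot (sel g) (xi1 c1 - xi1 g) + dot (sel c1) (xi1 c2 - xi1 c1)
      + dot (sel c2) (xi1 base - xi1 c2)), ?_⟩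
    rintro s ⟨n, gs, vs, h0, hn, hstep, hv, rfl⟩
    set G : ℕ → Heis := fun i => if i ≤ n then gs i else if i = n + 1 then c1 else c2 with hG
    set Vv : ℕ → V2 := fun i => if i < n then vs i else if i = n then sel g
      else if i = n + 1 then sel c1 else sel c2 with hV
    have hGi : ∀ i ≤ n, G i = gs i := fun i hi => by simp [hG, hi]
    have hG1 : G (n + 1) = c1 := by simp [hG]
    have hG2 : G (n + 2) = c2 := by simp [hG]
    have hclosed : IsClosedHSeq (n + 2) G := by
      constructor
      · intro i hi
        rcases Nat.lt_or_ge i n with h | h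
        · rw [hGi i (by omega), hGi (i + 1) (by omega)]
          exact hstep i h
        · rcases Nat.lt_or_ge i (n + 1) with h' | h'
          · have : i = n := by omega
            subst this
            rw [hGi i le_rfl, hn, hG1]
            exact ⟨w1, hc1⟩
          · have : i = n + 1 := by omega
            subst this
            rw [hG1, hG2]
            exact ⟨w2, hc2⟩
      · rw [hGi 0 (by omega), h0, hG2]
        exact ⟨w3, by rw [hw, hc2, hc1]⟩
    have hvm : ∀ i ≤ n + 2, Vv i ∈ T (G i) := by
      intro i hi
      rcases Nat.lt_or_ge i n with h | h
      · rw [hGi i (by omega)]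
        simp only [hV, if_pos h]
        exact hv i h
      · rcases Nat.lt_or_ge i (n + 1) with h' | h'
        · have : i = n := by omega
          subst this
          rw [hGi i le_rfl, hn]
          simp only [hV]
          simp
          exact hsel g
        · rcases Nat.lt_or_ge i (n + 2) with h'' | h''
          · have : i = n + 1 := by omega
            subst this
            rw [hG1]
            simp only [hV]
            simp
            exact hsel c1
          · have : i = n + 2 := by omega
            subst this
            rw [hG2]
            simp only [hV]
            have e1 : ¬ (n + 2 < n) := by omega
            have e2 : ¬ (n + 2 = n) := by omega
            have e3 : ¬ (n + 2 = n + 1) := by omega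
            rw [if_neg e1, if_neg e2, if_neg e3]
            exact hsel c2
    have hsum := hcyc (n + 2) (by omega) G hclosed Vv hvm
    -- compute the cyclic sum
    have hmain : ∑ i ∈ Finset.range (n + 2 + 1),
        dot (Vv i) (xi1 (G ((i + 1) % (n + 2 + 1))) - xi1 (G i))
        = (∑ i ∈ Finset.range n, dot (vs i) (xi1 (gs (i + 1)) - xi1 (gs i)))
          + (dot (sel g) (xi1 c1 - xi1 g) + dot (sel c1) (xi1 c2 - xi1 c1)
            + dot (sel c2) (xi1 base - xi1 c2)) := by
      rw [Finset.sum_range_succ, Finset.sum_range_succ, Finset.sum_range_succ]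
      have t0 : ∀ i ∈ Finset.range n,
          dot (Vv i) (xi1 (G ((i + 1) % (n + 2 + 1))) - xi1 (G i))
          = dot (vs i) (xi1 (gs (i + 1)) - xi1 (gs i)) := by
        intro i hi
        rw [Finset.mem_range] at hi
        rw [Nat.mod_eq_of_lt (by omega), hGi i (by omega), hGi (i + 1) (by omega)]
        simp only [hV, if_pos hi]
      rw [Finset.sum_congr rfl t0]
      have tn : dot (Vv n) (xi1 (G ((n + 1) % (n + 2 + 1))) - xi1 (G n))
          = dot (sel g) (xi1 c1 - xi1 g) := by
        rw [Nat.mod_eq_of_lt (by omega), hG1, hGi n le_rfl, hn]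
        simp [hV]
      have tn1 : dot (Vv (n + 1)) (xi1 (G ((n + 1 + 1) % (n + 2 + 1))) - xi1 (G (n + 1)))
          = dot (sel c1) (xi1 c2 - xi1 c1) := by
        rw [Nat.mod_eq_of_lt (by omega), hG1, hG2]
        simp [hV]
      have tn2 : dot (Vv (n + 2)) (xi1 (G ((n + 2 + 1) % (n + 2 + 1))) - xi1 (G (n + 2)))
          = dot (sel c2) (xi1 base - xi1 c2) := by
        rw [Nat.mod_self, hGi 0 (by omega), h0, hG2]
        simp only [hV]
        have e1 : ¬ (n + 2 < n) := by omega
        have e2 : ¬ (n + 2 = n) := by omega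
        have e3 : ¬ (n + 2 = n + 1) := by omega
        rw [if_neg e1, if_neg e2, if_neg e3]
      rw [tn, tn1, tn2]
      ring
    rw [hmain] at hsum
    linarith
  set u : Heis → ℝ := fun g => sSup (S g) with hu
  -- extension of chains by one step
  have hext : ∀ g (w v : V2), v ∈ T g → ∀ s ∈ S g, s + dot v w ∈ S (hmul g (hexp w)) := by
    intro g w v hv s hs
    obtain ⟨n, gs, vs, h0, hn, hstep, hvm, rfl⟩ := hs
    set G : ℕ → Heis := fun i => if i ≤ n then gs i else hmul g (hexp w) with hG
    set Vv : ℕ → V2 := fun i => if i < n then vs i else v with hV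
    have hGi : ∀ i ≤ n, G i = gs i := fun i hi => by simp [hG, hi]
    have hG1 : G (n + 1) = hmul g (hexp w) := by simp [hG]
    refine ⟨n + 1, G, Vv, by rw [hGi 0 (by omega), h0], hG1, ?_, ?_, ?_⟩
    · intro i hi
      rcases Nat.lt_or_ge i n with h | h
      · rw [hGi i (by omega), hGi (i + 1) (by omega)]
        exact hstep i h
      · have : i = n := by omega
        subst this
        rw [hGi i le_rfl, hn, hG1]
        exact ⟨w, rfl⟩
    · intro i hi
      rcases Nat.lt_or_ge i n with h | h
      · rw [hGi i (by omega)]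
        simp only [hV, if_pos h]
        exact hvm i h
      · have : i = n := by omega
        subst this
        rw [hGi i le_rfl, hn]
        simp only [hV, if_neg (lt_irrefl _)]
        exact hv
    · rw [Finset.sum_range_succ]
      congr 1
      · refine Finset.sum_congr rfl fun i hi => ?_
        rw [Finset.mem_range] at hi
        rw [hGi i (by omega), hGi (i + 1) (by omega)]
        simp only [hV, if_pos hi]
      · rw [hG1, hGi n le_rfl, hn, xi1_hmul_hexp, add_sub_cancel_left]
        simp [hV]
  -- the key subdifferential inequality
  have key : ∀ g (w v : V2), v ∈ T g → u g + dot v w ≤ u (hmul g (hexp w)) := by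
    intro g w v hv
    have h2 : ∀ s ∈ S g, s ≤ u (hmul g (hexp w)) - dot v w := by
      intro s hs
      have := le_csSup (hbdd (hmul g (hexp w))) (hext g w v hv s hs)
      simp only [hu] at *
      linarith
    have := csSup_le (hne g) h2
    simp only [hu] at *
    linarith
  have hsub : ∀ g, T g ⊆ Hsubdiff u g := fun g v hv w => key g w v hv
  -- H-convexity
  have hconv : HConvex u := by
    intro g w lam h0 h1
    set gl := hmul g (hexp (lam • w)) with hgl
    set v := sel gl with hvdef
    have hv : v ∈ Hsubdiff u gl := hsub gl (hsel gl)
    have hA : u gl + dot v ((-lam) • w) ≤ u g := by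
      have := hv ((-lam) • w)
      rwa [hgl, hmul_hexp_hexp_smul, show lam + -lam = 0 by ring, zero_smul,
        hmul_hexp_zero] at this
    have hB : u gl + dot v ((1 - lam) • w) ≤ u (hmul g (hexp w)) := by
      have := hv ((1 - lam) • w)
      rwa [hgl, hmul_hexp_hexp_smul, show lam + (1 - lam) = 1 by ring, one_smul] at this
    have hd1 : dot v ((-lam) • w) = -lam * dot v w := by
      simp only [dot, Prod.smul_fst, Prod.smul_snd, smul_eq_mul]
      ring
    have hd2 : dot v ((1 - lam) • w) = (1 - lam) * dot v w := by
      simp only [dot, Prod.smul_fst, Prod.smul_snd, smul_eq_mul]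
      ring
    rw [hd1] at hA
    rw [hd2] at hB
    nlinarith [mul_le_mul_of_nonneg_left hA (by linarith : (0:ℝ) ≤ 1 - lam),
      mul_le_mul_of_nonneg_left hB h0]
  refine ⟨u, hconv, ?_⟩
  by_contra hcon
  push_neg at hcon
  obtain ⟨g0, hg0⟩ := hcon
  exact hnoext ⟨Hsubdiff u, subdiff_cmono u, hsub, g0,
    (Set.ssubset_iff_subset_ne).mpr ⟨hsub g0, hg0⟩⟩
end

section
/- Let T : 𝐇 → ℝ² be a continuous (single-valued) map such that the set-valued map g ↦ {T(g)} is H-monotone. Then g ↦ {T(g)} is maximal H-monotone. -/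
/-- a continuous single-valued H-monotone map T : 𝐇 → ℝ² (with
full domain) is maximal H-monotone. -/
theorem stmt5 (T : Heis → V2) (hcont : Continuous T)
    (hmono : HMonotone (fun g => ({T g} : Set V2))) :
    MaximalHMonotone (fun g => ({T g} : Set V2)) := by
  refine ⟨hmono, ?_⟩
  rintro ⟨T', hT'mono, hsub, g₀, hlt⟩
  obtain ⟨v, hv, hvne⟩ : ∃ v ∈ T' g₀, v ≠ T g₀ := by
    obtain ⟨hle, hne⟩ := hlt
    by_contra h
    push_neg at h
    exact hne fun v hv => by simp [h v hv]
  have key : ∀ w : V2, 0 ≤ dot (T g₀ - v) w := by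
    intro w
    have hpos : ∀ s : ℝ, 0 < s → 0 ≤ dot (T (hmul g₀ (hexp (s • w))) - v) w := by
      intro s hs
      have hmem : hmul g₀ (hexp (s • w)) ∈ hplane g₀ := ⟨s • w, rfl⟩
      have h1 := hT'mono g₀ _ hmem v hv (T (hmul g₀ (hexp (s • w)))) (hsub _ rfl)
      have hxi : xi1 (hmul g₀ (hexp (s • w))) - xi1 g₀ = s • w := by
        simp [xi1, hmul, hexp, Prod.ext_iff]
      rw [hxi] at h1
      have h2 : dot (T (hmul g₀ (hexp (s • w))) - v) (s • w)
          = s * dot (T (hmul g₀ (hexp (s • w))) - v) w := by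
        simp [dot, Prod.smul_def, smul_eq_mul]; ring
      rw [h2] at h1
      exact nonneg_of_mul_nonneg_right h1 hs
    have hmapc : Continuous fun s : ℝ => hmul g₀ (hexp (s • w)) := by
      unfold hmul hexp; fun_prop
    have hTc : Continuous fun s : ℝ => T (hmul g₀ (hexp (s • w))) := hcont.comp hmapc
    have hcont2 : Continuous fun s : ℝ => dot (T (hmul g₀ (hexp (s • w))) - v) w := by
      unfold dot
      fun_prop
    have h0 : hmul g₀ (hexp ((0:ℝ) • w)) = g₀ := by
      simp [hmul, hexp]
    have htend : Filter.Tendsto (fun s : ℝ => dot (T (hmul g₀ (hexp (s • w))) - v) w)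
        (nhdsWithin 0 (Set.Ioi 0)) (nhds (dot (T (hmul g₀ (hexp ((0:ℝ) • w))) - v) w)) :=
      hcont2.continuousAt.tendsto.mono_left nhdsWithin_le_nhds
    have hlim := ge_of_tendsto htend
      (Filter.eventually_iff_exists_mem.2 ⟨Set.Ioi 0, self_mem_nhdsWithin,
        fun s hs => hpos s hs⟩)
    rwa [h0] at hlim
  have h1 := key (v - T g₀)
  have : T g₀ = v := by
    have hd : dot (T g₀ - v) (v - T g₀)
        = -(((T g₀).1 - v.1)^2 + ((T g₀).2 - v.2)^2) := by
      simp [dot]; ring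
    rw [hd] at h1
    have : (T g₀).1 = v.1 ∧ (T g₀).2 = v.2 := by constructor <;> nlinarith
    exact Prod.ext this.1 this.2
  exact hvne this.symm
end

section
/- The function u : 𝐇 → ℝ, u(x,y,t) = (3/2)x² + 2y² + t, is H-convex, and its H-subdifferential at every g = (x,y,t) ∈ 𝐇 is the singleton ∂_H u(g) = {(3x + 2y, −2x + 4y)}. Consequently, the single-valued map T(x,y,t) = (3x + 2y, −2x + 4y), viewed as the set-valued map g ↦ {T(g)}, is maximal H-cyclically monotone. -/
def Fmap (g : Heis) : V2 := (3*g.1+2*g.2.1, -2*g.1+4*g.2.1)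

lemma quad_trick (d : V2) (c : ℝ) (hc : 0 ≤ c)
    (h : ∀ w : V2, dot d w ≤ c * (w.1^2 + w.2^2)) : d = 0 := by
  have hc1 : (0:ℝ) < c + 1 := by linarith
  set s : ℝ := 1/(c+1) with hs
  have hspos : 0 < s := by positivity
  have hcs : c * s < 1 := by
    rw [hs, mul_one_div]; exact (div_lt_one hc1).2 (by linarith)
  have hkey := h (s * d.1, s * d.2)
  simp only [dot] at hkey
  have hS : d.1^2 + d.2^2 ≤ 0 := by
    by_contra hS0
    push_neg at hS0
    have hsS : 0 < s * (d.1^2 + d.2^2) := mul_pos hspos hS0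
    nlinarith [mul_pos hsS (sub_pos.2 hcs)]
  have h1 : d.1 = 0 := by
    have h2 : d.1 ^ 2 = 0 := le_antisymm (by nlinarith [sq_nonneg d.2]) (sq_nonneg d.1)
    exact pow_eq_zero_iff two_ne_zero |>.1 h2
  have h2 : d.2 = 0 := by
    have h3 : d.2 ^ 2 = 0 := le_antisymm (by nlinarith [sq_nonneg d.1]) (sq_nonneg d.2)
    exact pow_eq_zero_iff two_ne_zero |>.1 h3
  simp [Prod.ext_iff, h1, h2]

lemma uexpand (u : Heis → ℝ)
    (hu : ∀ x y t : ℝ, u (x, y, t) = 3 / 2 * x ^ 2 + 2 * y ^ 2 + t)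
    (g : Heis) (w : V2) :
    u (hmul g (hexp w)) = u g + dot (Fmap g) w + (3/2 * w.1^2 + 2 * w.2^2) := by
  obtain ⟨x, y, t⟩ := g
  obtain ⟨a, b⟩ := w
  simp [hmul, hexp, hu, dot, Fmap]
  ring

lemma xi1_hmul (g : Heis) (w : V2) : xi1 (hmul g (hexp w)) - xi1 g = w := by
  obtain ⟨x, y, t⟩ := g; obtain ⟨a, b⟩ := w
  simp [xi1, hmul, hexp]

lemma hmul_inv_exp (g : Heis) (w : V2) : hmul (hmul g (hexp w)) (hexp (-w)) = g := by
  obtain ⟨x, y, t⟩ := g; obtain ⟨a, b⟩ := w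
  simp [hmul, hexp, Prod.ext_iff]
  ring

/-- u(x,y,t) = (3/2)x² + 2y² + t is H-convex, its
H-subdifferential is the singleton {(3x+2y, −2x+4y)}, and the corresponding
set-valued map is maximal H-cyclically monotone. -/
theorem stmt13 (u : Heis → ℝ)
    (hu : ∀ x y t : ℝ, u (x, y, t) = 3 / 2 * x ^ 2 + 2 * y ^ 2 + t)
    (T : Heis → Set V2)
    (hT : ∀ x y t : ℝ, T (x, y, t) = {(3 * x + 2 * y, -2 * x + 4 * y)}) :
    HConvex u ∧ (∀ g : Heis, Hsubdiff u g = T g) ∧ MaximalHCyclicallyMonotone T := by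
  have hTF : ∀ g : Heis, T g = {Fmap g} := by
    rintro ⟨x, y, t⟩; exact hT x y t
  have hFdiff : ∀ g : Heis, ∀ w : V2,
      dot (Fmap (hmul g (hexp w))) w = dot (Fmap g) w + (3 * w.1^2 + 4 * w.2^2) := by
    rintro ⟨x, y, t⟩ ⟨a, b⟩
    simp [Fmap, hmul, hexp, dot]; ring
  refine ⟨?_, ?_, ?_, ?_⟩
  · -- HConvex
    intro g w lam h0 h1
    have e1 := uexpand u hu g (lam • w)
    have e2 := uexpand u hu g w
    have hsw : (lam • w).1 = lam * w.1 ∧ (lam • w).2 = lam * w.2 := ⟨rfl, rfl⟩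
    rw [e1, e2]
    simp only [dot, hsw.1, hsw.2]
    nlinarith [sq_nonneg w.1, sq_nonneg w.2, mul_nonneg h0 (sq_nonneg w.1),
      mul_nonneg h0 (sq_nonneg w.2), sq_nonneg (1 - lam), mul_le_one₀ h1 h0 h1,
      mul_nonneg (mul_nonneg h0 h0) (sq_nonneg w.1),
      mul_nonneg (mul_nonneg h0 h0) (sq_nonneg w.2)]
  · -- subdifferential
    intro g
    rw [hTF g]
    ext v
    simp only [Set.mem_singleton_iff, Hsubdiff, Set.mem_setOf_eq]
    constructor
    · intro hv
      have hd : v - Fmap g = 0 := by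
        apply quad_trick _ 2 (by norm_num)
        intro w
        have := hv w
        rw [uexpand u hu g w] at this
        have hdot : dot (v - Fmap g) w = dot v w - dot (Fmap g) w := by
          simp [dot, Prod.fst_sub, Prod.snd_sub]; ring
        nlinarith [sq_nonneg w.1, sq_nonneg w.2]
      have := sub_eq_zero.1 hd; exact this
    · rintro rfl w
      rw [uexpand u hu g w]
      nlinarith [sq_nonneg w.1, sq_nonneg w.2]
  · -- HCyclicallyMonotone T
    intro n hn g hseq v hv
    have hterm : ∀ i ∈ Finset.range (n+1),
        dot (v i) (xi1 (g ((i+1) % (n+1))) - xi1 (g i)) ≤ u (g ((i+1) % (n+1))) - u (g i) := by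
      intro i hi
      rw [Finset.mem_range] at hi
      have hvi : v i = Fmap (g i) := by
        have := hv i (Nat.lt_succ_iff.1 hi)
        rw [hTF] at this; exact this
      have hplanei : g ((i+1) % (n+1)) ∈ hplane (g i) := by
        rcases Nat.lt_succ_iff_lt_or_eq.1 hi with h | h
        · rw [Nat.mod_eq_of_lt (by omega)]; exact hseq.1 i h
        · subst h; rw [Nat.mod_self]; exact hseq.2
      obtain ⟨w, hw⟩ := hplanei
      rw [hw, xi1_hmul, hvi, uexpand u hu (g i) w]
      nlinarith [sq_nonneg w.1, sq_nonneg w.2]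
    calc ∑ i ∈ Finset.range (n + 1), dot (v i) (xi1 (g ((i + 1) % (n + 1))) - xi1 (g i))
        ≤ ∑ i ∈ Finset.range (n + 1), (u (g ((i + 1) % (n + 1))) - u (g i)) :=
          Finset.sum_le_sum hterm
      _ = 0 := by
          rw [Finset.sum_sub_distrib]
          have : ∑ i ∈ Finset.range (n + 1), u (g ((i + 1) % (n + 1)))
              = ∑ i ∈ Finset.range (n + 1), u (g i) := by
            rw [Finset.sum_range_succ, Nat.mod_self, Finset.sum_range_succ']
            congr 1
            apply Finset.sum_congr rfl
            intro i hi
            rw [Finset.mem_range] at hi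
            rw [Nat.mod_eq_of_lt (by omega)]
          rw [this, sub_self]
  · -- maximality
    rintro ⟨T', hT'cyc, hsub, g₀, hstrict⟩
    obtain ⟨v', hv'T', hv'not⟩ := Set.exists_of_ssubset hstrict
    have key : ∀ w : V2, dot (v' - Fmap g₀) w ≤ 4 * (w.1^2 + w.2^2) := by
      intro w
      set g₁ : Heis := hmul g₀ (hexp w) with hg₁
      have hseq : IsClosedHSeq 1 (fun i => if i = 0 then g₀ else g₁) := by
        constructor
        · intro i hi
          interval_cases i
          simp only [if_pos rfl, if_neg one_ne_zero]
          exact ⟨w, hg₁⟩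
        · simp only [if_pos rfl, if_neg one_ne_zero]
          exact ⟨-w, (hmul_inv_exp g₀ w).symm⟩
      have hmem : ∀ i ≤ 1, (fun i => if i = 0 then v' else Fmap g₁) i ∈
          T' ((fun i => if i = 0 then g₀ else g₁) i) := by
        intro i hi
        interval_cases i
        · simpa using hv'T'
        · simp only [if_neg one_ne_zero]
          apply hsub
          rw [hTF]; rfl
      have := hT'cyc 1 le_rfl _ hseq _ hmem
      rw [Finset.sum_range_succ, Finset.sum_range_succ, Finset.sum_range_zero] at this
      norm_num at this
      -- this : dot v' (xi1 g₁ - xi1 g₀) + dot (Fmap g₁) (xi1 g₀ - xi1 g₁) ≤ 0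
      have hx : xi1 g₁ - xi1 g₀ = w := xi1_hmul g₀ w
      have hx' : xi1 g₀ - xi1 g₁ = -w := by rw [← hx]; ring
      rw [hx, hx'] at this
      have hd1 : dot (Fmap g₁) (-w) = -(dot (Fmap g₁) w) := by simp [dot]; ring
      have hd2 : dot (v' - Fmap g₀) w = dot v' w - dot (Fmap g₀) w := by
        simp [dot]; ring
      have hF := hFdiff g₀ w
      rw [hg₁] at *
      nlinarith [sq_nonneg w.1, sq_nonneg w.2]
    have hd0 : v' - Fmap g₀ = 0 := quad_trick _ 4 (by norm_num) key
    have : v' = Fmap g₀ := sub_eq_zero.1 hd0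
    apply hv'not
    rw [hTF]
    exact this
end

section
/- Let N : 𝐇 → ℝ be the gauge function N(x,y,t) = ((x² + y²)² + t²)^{1/4}, and let λ > 0. Then for every g = (x,y,1) ∈ 𝐇 with 0 < x² + y² ≤ λ²/(1+λ)², one has |ξ₁(g) + λv| ≤ λ for every v ∈ ∂_H N(g); hence ξ₁(g) + λ∂_H N(g) ⊆ ξ₁(e) + λ∂_H N(e), where e = (0,0,0). Consequently, there exist g'' ∈ 𝐇 and two distinct points g, g' ∈ H_{g''} such that (ξ₁(g) + λ∂_H N(g)) ∩ (ξ₁(g') + λ∂_H N(g')) ≠ ∅; in particular the set-valued map h ↦ ξ₁(h) + λ∂_H N(h) restricted to a horizontal plane need not have a single-valued inverse. -/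
/-! ### Auxiliary lemmas -/

lemma slope_le' {F : ℝ → ℝ} {D c : ℝ} (hd : HasDerivAt F D 0)
    (h : ∀ s : ℝ, 0 < s → c * s ≤ F s - F 0) : c ≤ D := by
  have ht : Filter.Tendsto (slope F 0) (nhdsWithin 0 (Set.Ioi 0)) (nhds D) :=
    (hasDerivAt_iff_tendsto_slope.mp hd).mono_left
      (nhdsWithin_mono _ (fun s hs => ne_of_gt hs))
  refine ge_of_tendsto ht ?_
  filter_upwards [eventually_mem_nhdsWithin] with s hs
  have hs' : (0:ℝ) < s := hs
  rw [slope_def_field, le_div_iff₀ (by linarith)]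
  simpa using h s hs'

lemma hasDerivP' (x y a b : ℝ) :
    HasDerivAt (fun s : ℝ => ((x + s*a)^2 + (y + s*b)^2)^2 + (1 + 2*(s*a*y - x*(s*b)))^2)
      (4*((x^2+y^2)*(x*a+y*b) + (a*y - x*b))) 0 := by
  have h1 : HasDerivAt (fun s : ℝ => x + s*a) a 0 := by
    simpa using ((hasDerivAt_id (0:ℝ)).mul_const a).const_add x
  have h2 : HasDerivAt (fun s : ℝ => y + s*b) b 0 := by
    simpa using ((hasDerivAt_id (0:ℝ)).mul_const b).const_add y
  have h3 : HasDerivAt (fun s : ℝ => 1 + 2*(s*a*y - x*(s*b))) (2*(a*y - x*b)) 0 := by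
    have h : HasDerivAt (fun s : ℝ => s*(a*y - x*b)) (a*y - x*b) 0 := by
      simpa using (hasDerivAt_id (0:ℝ)).mul_const (a*y - x*b)
    have h' := (h.const_mul 2).const_add 1
    have heq : (fun s : ℝ => 1 + 2*(s*(a*y - x*b))) = (fun s : ℝ => 1 + 2*(s*a*y - x*(s*b))) := by
      funext s; ring
    rw [heq] at h'
    convert h' using 1
  have h4 := (((h1.pow 2).add (h2.pow 2)).pow 2).add (h3.pow 2)
  refine HasDerivAt.congr_deriv h4 ?_
  norm_num
  ring

lemma dir_le' (N : Heis → ℝ)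
    (hN : ∀ x y t : ℝ, N (x, y, t) = ((x ^ 2 + y ^ 2) ^ 2 + t ^ 2) ^ ((1:ℝ) / 4))
    (x y a b : ℝ) (v : V2) (hv : v ∈ Hsubdiff N (x, y, (1:ℝ))) :
    v.1*a + v.2*b ≤ ((x^2+y^2)^2+1) ^ ((1:ℝ)/4 - 1) * ((x^2+y^2)*(x*a+y*b) + (a*y - x*b)) := by
  set ρ : ℝ := (x^2+y^2)^2+1 with hρdef
  have hρpos : 0 < ρ := by positivity
  set P : ℝ → ℝ := fun s => ((x + s*a)^2 + (y + s*b)^2)^2 + (1 + 2*(s*a*y - x*(s*b)))^2 with hPdef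
  set F : ℝ → ℝ := fun s => (P s) ^ ((1:ℝ)/4) with hFdef
  have hP0 : P 0 = ρ := by simp [hPdef, hρdef]
  have hD : HasDerivAt F ((1:ℝ)/4 * P 0 ^ ((1:ℝ)/4 - 1) * (4*((x^2+y^2)*(x*a+y*b) + (a*y - x*b)))) 0 := by
    have hr := Real.hasDerivAt_rpow_const (x := P 0) (p := (1:ℝ)/4) (Or.inl (by rw [hP0]; positivity))
    exact hr.comp 0 (hasDerivP' x y a b)
  have hFN : ∀ s : ℝ, N (hmul (x, y, (1:ℝ)) (hexp (s*a, s*b))) = F s := by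
    intro s
    have : hmul (x, y, (1:ℝ)) (hexp (s*a, s*b)) = (x + s*a, y + s*b, 1 + 2*(s*a*y - x*(s*b))) := by
      simp [hmul, hexp]
    rw [this, hN]
  have hF0 : F 0 = N (x, y, (1:ℝ)) := by
    rw [hN]
    simp [hFdef, hP0, hρdef]
  have key : ∀ s : ℝ, 0 < s → (v.1*a + v.2*b) * s ≤ F s - F 0 := by
    intro s hs
    have h := hv (s*a, s*b)
    rw [hFN s] at h
    have hd : dot v (s*a, s*b) = (v.1*a + v.2*b) * s := by simp [dot]; ring
    rw [hd] at h
    linarith [hF0 ▸ h]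
  have := slope_le' hD key
  calc v.1*a + v.2*b ≤ (1:ℝ)/4 * P 0 ^ ((1:ℝ)/4 - 1) * (4*((x^2+y^2)*(x*a+y*b) + (a*y - x*b))) := this
    _ = ρ ^ ((1:ℝ)/4 - 1) * ((x^2+y^2)*(x*a+y*b) + (a*y - x*b)) := by rw [hP0]; ring

lemma subdiff_eq_grad (N : Heis → ℝ)
    (hN : ∀ x y t : ℝ, N (x, y, t) = ((x ^ 2 + y ^ 2) ^ 2 + t ^ 2) ^ ((1:ℝ) / 4))
    (x y : ℝ) (v : V2) (hv : v ∈ Hsubdiff N (x, y, (1:ℝ))) :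
    v.1 = ((x^2+y^2)^2+1) ^ ((1:ℝ)/4 - 1) * ((x^2+y^2)*x + y) ∧
    v.2 = ((x^2+y^2)^2+1) ^ ((1:ℝ)/4 - 1) * ((x^2+y^2)*y - x) := by
  have h1 := dir_le' N hN x y 1 0 v hv
  have h2 := dir_le' N hN x y (-1) 0 v hv
  have h3 := dir_le' N hN x y 0 1 v hv
  have h4 := dir_le' N hN x y 0 (-1) v hv
  constructor <;> nlinarith [h1, h2, h3, h4]

lemma normbound (x y lam : ℝ) (hlam : 0 < lam) (hpos : 0 < x^2+y^2)
    (hle : x^2+y^2 ≤ lam^2/(1+lam)^2)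
    (A : ℝ) (hA : A = ((x^2+y^2)^2+1) ^ ((1:ℝ)/4 - 1)) (v1 v2 : ℝ)
    (h1 : v1 = A * ((x^2+y^2)*x + y)) (h2 : v2 = A * ((x^2+y^2)*y - x)) :
    Real.sqrt ((x + lam*v1)^2 + (y + lam*v2)^2) ≤ lam := by
  set ρ : ℝ := (x^2+y^2)^2+1 with hρdef
  have hρ1 : 1 ≤ ρ := by nlinarith [sq_nonneg (x^2+y^2)]
  have hρpos : (0:ℝ) < ρ := by linarith
  have hA0 : 0 < A := by rw [hA]; positivity
  have hA1 : A ≤ 1 := by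
    rw [hA]; exact Real.rpow_le_one_of_one_le_of_nonpos hρ1 (by norm_num)
  have hA2 : A^2 * ρ ≤ 1 := by
    have : A^2 * ρ = ρ ^ (((1:ℝ)/4-1) + ((1:ℝ)/4-1) + 1) := by
      rw [hA, Real.rpow_add hρpos, Real.rpow_add hρpos, Real.rpow_one]; ring
    rw [this]
    exact Real.rpow_le_one_of_one_le_of_nonpos hρ1 (by norm_num)
  have hr : (x^2+y^2) * (1+lam)^2 ≤ lam^2 :=
    (le_div_iff₀ (by positivity : (0:ℝ) < (1+lam)^2)).mp hle
  have hr1 : x^2 + y^2 ≤ 1 := by nlinarith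
  have hTa : A * (x^2+y^2)^2 ≤ (x^2+y^2) := by nlinarith [sq_nonneg (x^2+y^2)]
  have hTb : A^2 * (x^2+y^2) * ρ ≤ (x^2+y^2) := by nlinarith
  have key : (x + lam*v1)^2 + (y + lam*v2)^2 ≤ lam^2 := by
    have e1 : (x + lam*v1)^2 + (y + lam*v2)^2
        = (x^2+y^2) + 2*lam*(A*(x^2+y^2)^2) + lam^2*(A^2*(x^2+y^2)*ρ) := by
      rw [h1, h2, hρdef]; ring
    rw [e1]
    nlinarith [hTa, hTb, hr, hlam]
  calc Real.sqrt ((x + lam*v1)^2 + (y + lam*v2)^2) ≤ Real.sqrt (lam^2) :=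
        Real.sqrt_le_sqrt key
    _ = lam := Real.sqrt_sq hlam.le

lemma cauchy_schwarz' (p w : V2) : dot p w ≤ nrm p * nrm w := by
  have h : (p.1*w.1 + p.2*w.2)^2 ≤ (p.1^2+p.2^2) * (w.1^2+w.2^2) := by
    nlinarith [sq_nonneg (p.1*w.2 - p.2*w.1)]
  calc dot p w ≤ |p.1*w.1 + p.2*w.2| := le_abs_self _
    _ = Real.sqrt ((p.1*w.1 + p.2*w.2)^2) := (Real.sqrt_sq_eq_abs _).symm
    _ ≤ Real.sqrt ((p.1^2+p.2^2) * (w.1^2+w.2^2)) := Real.sqrt_le_sqrt h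
    _ = _ := Real.sqrt_mul (by positivity) _

set_option maxHeartbeats 1000000 in
lemma polycore (x a b : ℝ) :
    ((x^4+1) + (x^3*a - x*b))^4 ≤ (x^4+1)^3 * ((((x+a)^2+b^2)^2 + (1-2*x*b)^2)) := by
  have h2 : ((x^4+1)+(x^3*a - x*b))^2 ≤ (x^4+1) * ((x^4+1) + 2*(x^3*a - x*b) + x^2*(a^2+b^2)) := by
    nlinarith [sq_nonneg (x^3*b + x*a)]
  have h3 : ((x^4+1) + 2*(x^3*a - x*b) + x^2*(a^2+b^2))^2
      ≤ (x^4+1) * ((((x+a)^2+b^2)^2 + (1-2*x*b)^2)) := by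
    nlinarith [sq_nonneg (x^2*(1-2*x*b) - ((x+a)^2+b^2))]
  have h4 := pow_le_pow_left₀ (sq_nonneg ((x^4+1)+(x^3*a - x*b))) h2 2
  have h5 := mul_le_mul_of_nonneg_left h3 (by positivity : (0:ℝ) ≤ (x^4+1)^2)
  calc ((x^4+1) + (x^3*a - x*b))^4
      = (((x^4+1)+(x^3*a - x*b))^2)^2 := by ring
    _ ≤ ((x^4+1) * ((x^4+1) + 2*(x^3*a - x*b) + x^2*(a^2+b^2)))^2 := h4
    _ = (x^4+1)^2 * ((x^4+1) + 2*(x^3*a - x*b) + x^2*(a^2+b^2))^2 := by ring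
    _ ≤ (x^4+1)^2 * ((x^4+1) * ((((x+a)^2+b^2)^2 + (1-2*x*b)^2))) := h5
    _ = (x^4+1)^3 * ((((x+a)^2+b^2)^2 + (1-2*x*b)^2)) := by ring

lemma grad_mem (N : Heis → ℝ)
    (hN : ∀ x y t : ℝ, N (x, y, t) = ((x ^ 2 + y ^ 2) ^ 2 + t ^ 2) ^ ((1:ℝ) / 4))
    (x : ℝ) :
    ((x^4+1) ^ ((1:ℝ)/4 - 1) * x^3, -((x^4+1) ^ ((1:ℝ)/4 - 1) * x)) ∈
      Hsubdiff N (x, 0, (1:ℝ)) := by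
  intro w
  obtain ⟨a, b⟩ := w
  set ρ : ℝ := x^4+1 with hρdef
  have hρpos : (0:ℝ) < ρ := by positivity
  set A : ℝ := ρ ^ ((1:ℝ)/4 - 1) with hAdef
  set m : ℝ := ρ ^ ((1:ℝ)/4) with hmdef
  have hm0 : 0 < m := Real.rpow_pos_of_pos hρpos _
  have hm4 : m^4 = ρ := by
    rw [hmdef, ← Real.rpow_natCast (ρ ^ ((1:ℝ)/4)) 4, ← Real.rpow_mul hρpos.le]
    norm_num
  have hAm : A * m^3 = 1 := by
    rw [hAdef, hmdef, ← Real.rpow_natCast (ρ ^ ((1:ℝ)/4)) 3, ← Real.rpow_mul hρpos.le,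
      ← Real.rpow_add hρpos]
    norm_num
  have hNg : N (x, 0, (1:ℝ)) = m := by
    rw [hN, hmdef, hρdef]; norm_num; congr 1; ring
  have hmulg : hmul (x, 0, (1:ℝ)) (hexp (a, b)) = (x + a, b, 1 - 2*(x*b)) := by
    simp [hmul, hexp]; ring
  have hNR : N (hmul (x, 0, (1:ℝ)) (hexp (a, b)))
      = (((x+a)^2+b^2)^2 + (1-2*x*b)^2) ^ ((1:ℝ)/4) := by
    rw [hmulg, hN]; ring_nf
  have hdot : dot (A * x^3, -(A * x)) (a, b) = A*(x^3*a - x*b) := by simp [dot]; ring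
  rw [hNR]
  show N (x, 0, (1:ℝ)) + dot (A * x^3, -(A * x)) (a, b) ≤ _
  rw [hNg, hdot]
  set R : ℝ := ((x+a)^2+b^2)^2 + (1-2*x*b)^2 with hRdef
  have hR0 : 0 ≤ R := by positivity
  set L : ℝ := m + A*(x^3*a - x*b) with hLdef
  rcases le_or_gt L 0 with hL | hL
  · exact hL.trans (Real.rpow_nonneg hR0 _)
  · have hLm : L * m^3 = ρ + (x^3*a - x*b) := by
      rw [hLdef]; linear_combination hm4 + (x^3*a - x*b)*hAm
    have hkey : (L*m^3)^4 ≤ ρ^3 * R := by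
      rw [hLm, hRdef, hρdef]; exact polycore x a b
    have hL4 : L^4 ≤ R := by
      have hm12 : (m^3)^4 = ρ^3 := by rw [← hm4]; ring
      have h : L^4 * ρ^3 ≤ R * ρ^3 := by
        calc L^4 * ρ^3 = (L*m^3)^4 := by rw [← hm12]; ring
          _ ≤ ρ^3 * R := hkey
          _ = R * ρ^3 := by ring
      exact le_of_mul_le_mul_right h (by positivity)
    calc L = (L^4) ^ ((1:ℝ)/4) := by
          rw [← Real.rpow_natCast L 4, ← Real.rpow_mul hL.le]
          norm_num
      _ ≤ R ^ ((1:ℝ)/4) := Real.rpow_le_rpow (by positivity) hL4 (by norm_num)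

/-- for the gauge N and λ > 0, at points g = (x,y,1) with
0 < x²+y² ≤ λ²/(1+λ)² one has |ξ₁(g) + λv| ≤ λ for all v ∈ ∂_H N(g), hence
ξ₁(g) + λ∂_H N(g) ⊆ ξ₁(e) + λ∂_H N(e); consequently two distinct points of a
common horizontal plane have intersecting images under ξ₁ + λ∂_H N. -/
theorem stmt17 (N : Heis → ℝ)
    (hN : ∀ x y t : ℝ, N (x, y, t) = ((x ^ 2 + y ^ 2) ^ 2 + t ^ 2) ^ ((1:ℝ) / 4))
    (lam : ℝ) (hlam : 0 < lam) :
    (∀ x y : ℝ, 0 < x ^ 2 + y ^ 2 → x ^ 2 + y ^ 2 ≤ lam ^ 2 / (1 + lam) ^ 2 →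
      (∀ v ∈ Hsubdiff N (x, y, (1:ℝ)), nrm (xi1 (x, y, (1:ℝ)) + lam • v) ≤ lam) ∧
      {p : V2 | ∃ v ∈ Hsubdiff N (x, y, (1:ℝ)), p = xi1 (x, y, (1:ℝ)) + lam • v} ⊆
        {p : V2 | ∃ v ∈ Hsubdiff N ((0:ℝ), (0:ℝ), (0:ℝ)),
          p = xi1 ((0:ℝ), (0:ℝ), (0:ℝ)) + lam • v}) ∧
    (∃ g'' g g' : Heis, g ∈ hplane g'' ∧ g' ∈ hplane g'' ∧ g ≠ g' ∧
      ({p : V2 | ∃ v ∈ Hsubdiff N g, p = xi1 g + lam • v} ∩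
        {p : V2 | ∃ v ∈ Hsubdiff N g', p = xi1 g' + lam • v}).Nonempty) := by
  have hN0 : N ((0:ℝ), (0:ℝ), (0:ℝ)) = 0 := by
    rw [hN]; norm_num
  -- every point of norm ≤ lam lies in the image set at e
  have hball : ∀ p : V2, nrm p ≤ lam →
      p ∈ {p : V2 | ∃ v ∈ Hsubdiff N ((0:ℝ), (0:ℝ), (0:ℝ)),
          p = xi1 ((0:ℝ), (0:ℝ), (0:ℝ)) + lam • v} := by
    intro p hp
    refine ⟨lam⁻¹ • p, ?_, ?_⟩
    · intro w
      have hmule : hmul ((0:ℝ), (0:ℝ), (0:ℝ)) (hexp w) = (w.1, w.2, 0) := by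
        simp [hmul, hexp]
      have hNw : N (hmul ((0:ℝ), (0:ℝ), (0:ℝ)) (hexp w)) = nrm w := by
        rw [hmule, hN]
        have hq : (0:ℝ) ≤ w.1^2 + w.2^2 := by positivity
        rw [nrm, Real.sqrt_eq_rpow]
        rw [show ((w.1^2 + w.2^2)^2 + (0:ℝ)^2) = (w.1^2 + w.2^2) ^ (2:ℕ) by ring]
        rw [← Real.rpow_natCast (w.1^2 + w.2^2) 2, ← Real.rpow_mul hq]
        norm_num
      rw [hNw, hN0]
      have hcs : dot p w ≤ nrm p * nrm w := cauchy_schwarz' p w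
      have hnw : 0 ≤ nrm w := Real.sqrt_nonneg _
      have hdp : dot (lam⁻¹ • p) w = lam⁻¹ * dot p w := by
        simp [dot, smul_eq_mul]; ring
      rw [hdp]
      have h1 : dot p w ≤ lam * nrm w :=
        hcs.trans (mul_le_mul_of_nonneg_right hp hnw)
      calc 0 + lam⁻¹ * dot p w ≤ lam⁻¹ * (lam * nrm w) := by
            rw [zero_add]
            exact mul_le_mul_of_nonneg_left h1 (by positivity)
        _ = nrm w := by field_simp
    · have : lam • lam⁻¹ • p = p := by
        rw [smul_smul, mul_inv_cancel₀ hlam.ne', one_smul]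
      rw [this]
      simp [xi1, Prod.ext_iff]
  have main1 : ∀ x y : ℝ, 0 < x ^ 2 + y ^ 2 → x ^ 2 + y ^ 2 ≤ lam ^ 2 / (1 + lam) ^ 2 →
      (∀ v ∈ Hsubdiff N (x, y, (1:ℝ)), nrm (xi1 (x, y, (1:ℝ)) + lam • v) ≤ lam) ∧
      {p : V2 | ∃ v ∈ Hsubdiff N (x, y, (1:ℝ)), p = xi1 (x, y, (1:ℝ)) + lam • v} ⊆
        {p : V2 | ∃ v ∈ Hsubdiff N ((0:ℝ), (0:ℝ), (0:ℝ)),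
          p = xi1 ((0:ℝ), (0:ℝ), (0:ℝ)) + lam • v} := by
    intro x y hpos hle
    have hbd : ∀ v ∈ Hsubdiff N (x, y, (1:ℝ)), nrm (xi1 (x, y, (1:ℝ)) + lam • v) ≤ lam := by
      intro v hv
      obtain ⟨e1, e2⟩ := subdiff_eq_grad N hN x y v hv
      have hc : xi1 (x, y, (1:ℝ)) + lam • v = (x + lam * v.1, y + lam * v.2) := by
        simp [xi1, Prod.ext_iff, smul_eq_mul]
      rw [hc]
      show Real.sqrt ((x + lam*v.1)^2 + (y + lam*v.2)^2) ≤ lam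
      exact normbound x y lam hlam hpos hle _ rfl v.1 v.2 e1 e2
    refine ⟨hbd, ?_⟩
    rintro p ⟨v, hv, rfl⟩
    exact hball _ (hbd v hv)
  refine ⟨main1, ?_⟩
  -- Part 3
  set x0 : ℝ := lam / (1 + lam) with hx0def
  have h1lam : (0:ℝ) < 1 + lam := by linarith
  have hx0 : 0 < x0 := by positivity
  refine ⟨((0:ℝ), (1+lam)/(2*lam), (0:ℝ)), (x0, 0, (1:ℝ)), ((0:ℝ), (0:ℝ), (0:ℝ)),
    ⟨(x0, -((1+lam)/(2*lam))), ?_⟩, ⟨(0, -((1+lam)/(2*lam))), ?_⟩, ?_, ?_⟩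
  · simp [hmul, hexp, Prod.ext_iff, hx0def]
    field_simp
  · simp [hmul, hexp, Prod.ext_iff]
  · intro h
    rw [Prod.ext_iff, Prod.ext_iff] at h
    exact one_ne_zero h.2.2
  · -- intersection
    set A0 : ℝ := (x0^4+1) ^ ((1:ℝ)/4 - 1) with hA0def
    set vg : V2 := (A0 * x0^3, -(A0 * x0)) with hvgdef
    have hmem : vg ∈ Hsubdiff N (x0, 0, (1:ℝ)) := grad_mem N hN x0
    refine ⟨xi1 (x0, 0, (1:ℝ)) + lam • vg, ⟨vg, hmem, rfl⟩, ?_⟩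
    have hcond1 : 0 < x0^2 + (0:ℝ)^2 := by positivity
    have hcond2 : x0^2 + (0:ℝ)^2 ≤ lam^2/(1+lam)^2 := by
      rw [hx0def, div_pow]
      norm_num
    exact (main1 x0 0 hcond1 hcond2).2 ⟨vg, hmem, rfl⟩
end
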